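/- arXiv:2209.10306 — 8 statements merged into one kernel-verified Lean document; each statement's English description precedes it below -/
import Mathlib

section
/- Let α be a type (alphabet), let k ≥ 1, and let R : (Fin k → List α) → Prop be an arbitrary acceptance predicate on k-tuples of words. Define the family 𝔏 = {L : Set (List α) | there exists f : Fin k → List α with f i ∈ L for all i and R f} (the hyperlanguage of an ∃^k quantification condition with underlying acceptance predicate R). Then for every L ∈ 𝔏 there is a nonempty finite subset S ⊆ L with at most k elements such that S ∈ 𝔏. Consequently, for every language L with more than k elements, 𝔏 ≠ {L}. -/
/-- The hyperlanguage of an `∃^k` quantification condition with underlying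
acceptance predicate `R` on `k`-tuples of words. -/
def existsHyperlanguage {α : Type*} (k : ℕ) (R : (Fin k → List α) → Prop) :
    Set (Set (List α)) :=
  {L | ∃ f : Fin k → List α, (∀ i, f i ∈ L) ∧ R f}

theorem existsHyperlanguage_small_subset_and_not_singleton
    {α : Type*} (k : ℕ) (hk : 1 ≤ k) (R : (Fin k → List α) → Prop) :
    (∀ L ∈ existsHyperlanguage k R, ∃ S : Set (List α), S ⊆ L ∧ S.Nonempty ∧
      S.Finite ∧ S.encard ≤ (k : ℕ∞) ∧ S ∈ existsHyperlanguage k R) ∧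
    (∀ L : Set (List α), (k : ℕ∞) < L.encard → existsHyperlanguage k R ≠ {L}) := by
  have main : ∀ L ∈ existsHyperlanguage k R, ∃ S : Set (List α), S ⊆ L ∧ S.Nonempty ∧
      S.Finite ∧ S.encard ≤ (k : ℕ∞) ∧ S ∈ existsHyperlanguage k R := by
    intro L hL
    obtain ⟨f, hf, hR⟩ := hL
    refine ⟨Set.range f, ?_, ?_, Set.finite_range f, ?_, f, fun i => ⟨i, rfl⟩, hR⟩
    · rintro x ⟨i, rfl⟩; exact hf i
    · exact ⟨f ⟨0, hk⟩, ⟨0, hk⟩, rfl⟩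
    · rw [← Set.image_univ]
      calc (f '' Set.univ).encard ≤ (Set.univ : Set (Fin k)).encard :=
            Set.encard_image_le f _
        _ = (k : ℕ∞) := by simp [Set.encard_univ]
  refine ⟨main, fun L hL heq => ?_⟩
  have hLmem : L ∈ existsHyperlanguage k R := by rw [heq]; rfl
  obtain ⟨S, hSL, hne, hfin, hcard, hSmem⟩ := main L hLmem
  rw [heq] at hSmem
  have : S = L := hSmem
  subst this
  exact absurd hL (not_lt.mpr hcard)
end

section
/- Let α be a type (alphabet), let k ≥ 1 and m ≥ 0, and let R : (Fin k → List α) → (Fin m → List α) → Prop be an arbitrary acceptance predicate. Define 𝔏 = {L : Set (List α) | L is nonempty and there exists x : Fin k → List α with x i ∈ L for all i, such that for every y : Fin m → List α with y j ∈ L for all j, R x y holds} (the hyperlanguage of an ∃^k∀^m quantification condition). Then for every L ∈ 𝔏, the set S = Set.range x for a witnessing x is a nonempty subset of L with at most k elements satisfying S ∈ 𝔏. Consequently, for every language L with more than k elements, 𝔏 ≠ {L}. -/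
/-- The hyperlanguage of an `∃^k∀^m` quantification condition with underlying
acceptance predicate `R`. -/
def existsForallHyperlanguage {α : Type*} (k m : ℕ)
    (R : (Fin k → List α) → (Fin m → List α) → Prop) : Set (Set (List α)) :=
  {L | L.Nonempty ∧ ∃ x : Fin k → List α, (∀ i, x i ∈ L) ∧
    ∀ y : Fin m → List α, (∀ j, y j ∈ L) → R x y}

theorem existsForallHyperlanguage_range_witness_and_not_singleton
    {α : Type*} (k m : ℕ) (hk : 1 ≤ k)
    (R : (Fin k → List α) → (Fin m → List α) → Prop) :
    (∀ L ∈ existsForallHyperlanguage k m R, ∀ x : Fin k → List α,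
      (∀ i, x i ∈ L) → (∀ y : Fin m → List α, (∀ j, y j ∈ L) → R x y) →
      (Set.range x).Nonempty ∧ Set.range x ⊆ L ∧
        (Set.range x).encard ≤ (k : ℕ∞) ∧
        Set.range x ∈ existsForallHyperlanguage k m R) ∧
    (∀ L : Set (List α), (k : ℕ∞) < L.encard →
      existsForallHyperlanguage k m R ≠ {L}) := by
  have main : ∀ L ∈ existsForallHyperlanguage k m R, ∀ x : Fin k → List α,
      (∀ i, x i ∈ L) → (∀ y : Fin m → List α, (∀ j, y j ∈ L) → R x y) →
      (Set.range x).Nonempty ∧ Set.range x ⊆ L ∧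
        (Set.range x).encard ≤ (k : ℕ∞) ∧
        Set.range x ∈ existsForallHyperlanguage k m R := by
    intro L hL x hx hR
    have hne : (Set.range x).Nonempty := ⟨x ⟨0, hk⟩, Set.mem_range_self _⟩
    have hsub : Set.range x ⊆ L := by rintro _ ⟨i, rfl⟩; exact hx i
    have hcard : (Set.range x).encard ≤ (k : ℕ∞) := by
      calc (Set.range x).encard = (x '' Set.univ).encard := by rw [Set.image_univ]
        _ ≤ (Set.univ : Set (Fin k)).encard := Set.encard_image_le _ _
        _ = (k : ℕ∞) := by simp [Set.encard_univ]
    refine ⟨hne, hsub, hcard, hne, x, fun i => Set.mem_range_self _, fun y hy => ?_⟩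
    exact hR y fun j => hsub (hy j)
  refine ⟨main, fun L hL heq => ?_⟩
  have hLmem : L ∈ existsForallHyperlanguage k m R := heq ▸ rfl
  obtain ⟨hne, x, hx, hR⟩ := hLmem
  obtain ⟨-, -, hcard, hmem⟩ := main L (heq ▸ rfl) x hx hR
  rw [heq, Set.mem_singleton_iff] at hmem
  rw [hmem] at hcard
  exact absurd hcard (not_le.mpr hL)
end

section
/- Let W be a type, let L : Set W be an infinite set, and let R : W → W → Prop be a relation such that for every w ∈ L there exists u ∈ L with R w u. Then there exists a set S with S ⊆ L, S ≠ L, S nonempty, and such that for every w ∈ S there exists u ∈ S with R w u. -/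
theorem infinite_forall_exists_proper_subset {W : Type*} (L : Set W)
    (hL : L.Infinite) (R : W → W → Prop) (h : ∀ w ∈ L, ∃ u ∈ L, R w u) :
    ∃ S : Set W, S ⊆ L ∧ S ≠ L ∧ S.Nonempty ∧ ∀ w ∈ S, ∃ u ∈ S, R w u := by
  classical
  obtain ⟨w₀, hw₀⟩ := hL.nonempty
  set f : W → W := fun w => if hw : w ∈ L then (h w hw).choose else w with hf
  have hfL : ∀ w ∈ L, f w ∈ L := by
    intro w hw
    simp only [hf, dif_pos hw]
    exact (h w hw).choose_spec.1
  have hfR : ∀ w ∈ L, R w (f w) := by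
    intro w hw
    simp only [hf, dif_pos hw]
    exact (h w hw).choose_spec.2
  set g : ℕ → W := fun n => f^[n] w₀ with hg
  have hgL : ∀ n, g n ∈ L := by
    intro n
    induction n with
    | zero => exact hw₀
    | succ k ih =>
      have : g (k + 1) = f (g k) := by
        simp [hg, Function.iterate_succ_apply']
      rw [this]; exact hfL _ ih
  have hgsucc : ∀ n, g (n + 1) = f (g n) := by
    intro n; simp [hg, Function.iterate_succ_apply']
  by_cases hinj : Function.Injective g
  · -- take the tail
    refine ⟨Set.range (fun n => g (n + 1)), ?_, ?_, ⟨g 1, 0, rfl⟩, ?_⟩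
    · rintro x ⟨n, rfl⟩; exact hgL _
    · intro hEq
      have : g 0 ∈ Set.range (fun n => g (n + 1)) := hEq ▸ hw₀
      obtain ⟨n, hn⟩ := this
      have := hinj hn
      omega
    · rintro x ⟨n, rfl⟩
      exact ⟨g (n + 2), ⟨n + 1, rfl⟩, by rw [hgsucc (n+1)]; exact hfR _ (hgL _)⟩
  · -- range g is finite, hence proper
    obtain ⟨m, n, hmn, hne⟩ : ∃ m n, g m = g n ∧ m ≠ n := by
      simp only [Function.Injective, not_forall] at hinj
      obtain ⟨m, n, h1, h2⟩ := hinj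
      exact ⟨m, n, h1, h2⟩
    wlog hlt : m < n generalizing m n
    · exact this n m hmn.symm hne.symm (by omega)
    have hper : ∀ k, g (k + n) = g (k + m) := by
      intro k
      induction k with
      | zero => simpa using hmn.symm
      | succ j ih =>
        have h1 : j + 1 + n = (j + n) + 1 := by omega
        have h2 : j + 1 + m = (j + m) + 1 := by omega
        rw [h1, h2, hgsucc, hgsucc, ih]
    have hbound : ∀ k, ∃ j < n, g k = g j := by
      intro k
      induction k using Nat.strong_induction_on with
      | _ k ih =>
        by_cases hk : k < n
        · exact ⟨k, hk, rfl⟩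
        · have hk' : k - n + n = k := Nat.sub_add_cancel (by omega)
          have : g k = g ((k - n) + m) := by
            have h1 := hper (k - n); rw [hk'] at h1; exact h1
          obtain ⟨j, hj, hj'⟩ := ih ((k - n) + m) (by omega)
          exact ⟨j, hj, this.trans hj'⟩
    have hfin : (Set.range g).Finite := by
      apply Set.Finite.subset ((Set.finite_Iio n).image g)
      rintro x ⟨k, rfl⟩
      obtain ⟨j, hj, hj'⟩ := hbound k
      exact ⟨j, hj, hj'.symm⟩
    refine ⟨Set.range g, ?_, ?_, ⟨g 0, 0, rfl⟩, ?_⟩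
    · rintro x ⟨k, rfl⟩; exact hgL _
    · intro hEq
      exact hL (hEq ▸ hfin)
    · rintro x ⟨k, rfl⟩
      exact ⟨g (k + 1), ⟨k + 1, rfl⟩, by rw [hgsucc]; exact hfR _ (hgL _)⟩
end

section
/- Let α be a type (alphabet) and let L : Set (List α) be an infinite language. For words u, v over α, say that a word p over Option α × Option α is the padded pairing of (u, v) if List.map Prod.fst p = List.map some u ++ List.replicate (v.length - u.length) none and List.map Prod.snd p = List.map some v ++ List.replicate (u.length - v.length) none (truncated subtraction). Then for every language P over Option α × Option α, the family {L' : Set (List α) | L' is nonempty and for every u ∈ L' there exists v ∈ L' and p ∈ P such that p is the padded pairing of (u, v)} is not equal to {L}. -/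
/-- `p` is the padded pairing of the pair of words `(u, v)`: its first
components spell `u` padded at the end with `none` up to the length of `v`,
and its second components spell `v` padded at the end with `none` up to the
length of `u`. -/
def IsPaddedPairing {α : Type*} (u v : List α)
    (p : List (Option α × Option α)) : Prop :=
  p.map Prod.fst = u.map some ++ List.replicate (v.length - u.length) none ∧
  p.map Prod.snd = v.map some ++ List.replicate (u.length - v.length) none

theorem infinite_not_forall_exists_realizable {α : Type*}
    (L : Set (List α)) (hL : L.Infinite)
    (P : Set (List (Option α × Option α))) :
    {L' : Set (List α) | L'.Nonempty ∧ ∀ u ∈ L', ∃ v ∈ L', ∃ p ∈ P,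
      IsPaddedPairing u v p} ≠ {L} := by
  intro h
  have hLmem : L ∈ {L' : Set (List α) | L'.Nonempty ∧ ∀ u ∈ L', ∃ v ∈ L', ∃ p ∈ P,
      IsPaddedPairing u v p} := by rw [h]; rfl
  obtain ⟨hne, hprop⟩ := hLmem
  classical
  -- choice function
  set g : List α → List α := fun u => if hu : u ∈ L then (hprop u hu).choose else u with hg
  have hgL : ∀ u ∈ L, g u ∈ L := by
    intro u hu
    simp only [hg, dif_pos hu]
    exact (hprop u hu).choose_spec.1
  have hgP : ∀ u ∈ L, ∃ p ∈ P, IsPaddedPairing u (g u) p := by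
    intro u hu
    simp only [hg, dif_pos hu]
    exact (hprop u hu).choose_spec.2
  obtain ⟨u0, hu0⟩ := hne
  have hiter : ∀ n, g^[n] u0 ∈ L := by
    intro n
    induction n with
    | zero => exact hu0
    | succ n ih => rw [Function.iterate_succ_apply']; exact hgL _ ih
  -- the orbit of any point in L is in the hyperlanguage, hence equals L
  have horbit : ∀ a ∈ L, Set.range (fun n => g^[n] a) = L := by
    intro a ha
    have haiter : ∀ n, g^[n] a ∈ L := by
      intro n
      induction n with
      | zero => exact ha
      | succ n ih => rw [Function.iterate_succ_apply']; exact hgL _ ih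
    have : Set.range (fun n => g^[n] a) ∈ {L' : Set (List α) | L'.Nonempty ∧
        ∀ u ∈ L', ∃ v ∈ L', ∃ p ∈ P, IsPaddedPairing u v p} := by
      constructor
      · exact ⟨a, 0, rfl⟩
      · rintro u ⟨n, rfl⟩
        refine ⟨g (g^[n] a), ⟨n + 1, ?_⟩, hgP _ (haiter n)⟩
        show g^[n + 1] a = g (g^[n] a)
        rw [Function.iterate_succ_apply']
    rw [h] at this
    exact this
  -- u0 is in the orbit of (g u0), giving periodicity
  have hu0orb : u0 ∈ Set.range (fun n => g^[n] (g u0)) := by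
    rw [horbit (g u0) (hgL u0 hu0)]; exact hu0
  obtain ⟨k, hk⟩ := hu0orb
  have hper : Function.IsPeriodicPt g (k + 1) u0 := by
    show g^[k + 1] u0 = u0
    rw [Function.iterate_succ_apply]
    exact hk
  -- orbit of u0 is finite, but it equals L — contradiction
  have hfin : (Set.range (fun n => g^[n] u0)).Finite := by
    have hsub : Set.range (fun n => g^[n] u0) ⊆
        (fun n => g^[n] u0) '' (Set.Iio (k + 1)) := by
      rintro x ⟨n, rfl⟩
      exact ⟨n % (k + 1), Nat.mod_lt n (Nat.succ_pos k), hper.iterate_mod_apply n⟩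
    exact ((Set.finite_Iio _).image _).subset hsub
  rw [horbit u0 hu0] at hfin
  exact hL hfin
end

section
/- Let α be a finite type (alphabet) with decidable equality and let L : Set (List α) be a finite nonempty language. For words u, v over α, say that a word p over Option α × Option α is the padded pairing of (u, v) if List.map Prod.fst p = List.map some u ++ List.replicate (v.length - u.length) none and List.map Prod.snd p = List.map some v ++ List.replicate (u.length - v.length) none (truncated subtraction). Then there exists a regular language P over the alphabet Option α × Option α such that for every language L' over α: (L' is nonempty and for every u ∈ L' there exists v ∈ L' and p ∈ P with p the padded pairing of (u, v)) if and only if L' = L. -/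
section Aux

/-- Any DFA with finitely many states accepts a regular language (state space
transported to `Fin _` to land in `Type 0`). -/
theorem MyAux.accepts_isRegular {β : Type*} {σ : Type*} [Fintype σ] (M : DFA β σ) :
    M.accepts.IsRegular := by
  classical
  let e := Fintype.equivFin σ
  let M' : DFA β (Fin (Fintype.card σ)) :=
    { step := fun s a => e (M.step (e.symm s) a)
      start := e M.start
      accept := {s | e.symm s ∈ M.accept} }
  have hev : ∀ (x : List β) (s : σ), M'.evalFrom (e s) x = e (M.evalFrom s x) := by
    intro x
    induction x with
    | nil => intro s; rfl
    | cons a x ih =>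
      intro s
      have : M'.evalFrom (e s) (a :: x) = M'.evalFrom (M'.step (e s) a) x := rfl
      rw [this]
      have hs : M'.step (e s) a = e (M.step s a) := by simp [M']
      rw [hs, ih]
      rfl
  refine ⟨Fin (Fintype.card σ), inferInstance, M', ?_⟩
  ext x
  rw [DFA.mem_accepts, DFA.mem_accepts]
  show M'.evalFrom M'.start x ∈ M'.accept ↔ M.evalFrom M.start x ∈ M.accept
  rw [hev x M.start]
  simp [M']

/-- A finite language over a finite alphabet is regular. -/
theorem MyAux.isRegular_of_finite {β : Type*} [Finite β] {P : Language β}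
    (h : Set.Finite (P : Set (List β))) : P.IsRegular := by
  classical
  set N := h.toFinset.sup List.length with hN
  have hbound : ∀ x ∈ P, x.length ≤ N := fun x hx =>
    Finset.le_sup (f := List.length) (h.mem_toFinset.mpr hx)
  haveI : Finite {l : List β // l.length ≤ N} :=
    (List.finite_length_le β N).to_subtype
  haveI : Fintype {l : List β // l.length ≤ N} := Fintype.ofFinite _
  let M : DFA β (Option {l : List β // l.length ≤ N}) :=
    { step := fun s a => s.bind fun l =>
        if h : l.val.length + 1 ≤ N then
          some ⟨l.val ++ [a], by simpa using h⟩ else none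
      start := some ⟨[], Nat.zero_le N⟩
      accept := {s | ∃ l : {l : List β // l.length ≤ N}, s = some l ∧ (l : List β) ∈ P} }
  have dead : ∀ x : List β, M.evalFrom none x = none := by
    intro x
    induction x with
    | nil => rfl
    | cons a x ih => simpa [DFA.evalFrom, M] using ih
  have key : ∀ (x l : List β) (hl : l.length ≤ N),
      M.evalFrom (some ⟨l, hl⟩) x =
        if h : l.length + x.length ≤ N then
          some ⟨l ++ x, by rw [List.length_append]; exact h⟩ else none := by
    intro x
    induction x with
    | nil =>
      intro l hl
      simp [DFA.evalFrom, hl]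
    | cons a x ih =>
      intro l hl
      have hstep : M.evalFrom (some ⟨l, hl⟩) (a :: x)
          = M.evalFrom (M.step (some ⟨l, hl⟩) a) x := rfl
      by_cases h1 : l.length + 1 ≤ N
      · have hs : M.step (some ⟨l, hl⟩) a = some ⟨l ++ [a], by simpa using h1⟩ := by
          simp [M, h1]; omega
        rw [hstep, hs, ih]
        by_cases h2 : l.length + (a :: x).length ≤ N
        · rw [dif_pos (by simp at h2 ⊢; omega), dif_pos h2]
          congr 1
          apply Subtype.ext
          simp
        · rw [dif_neg (by simp at h2 ⊢; omega), dif_neg h2]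
      · have hs : M.step (some ⟨l, hl⟩) a = none := by simp [M, h1]; omega
        rw [hstep, hs, dead, dif_neg (by simp; omega)]
  have hacc : M.accepts = P := by
    ext x
    rw [DFA.mem_accepts]
    show M.evalFrom M.start x ∈ M.accept ↔ x ∈ P
    have heval : M.evalFrom M.start x =
        if h : x.length ≤ N then some ⟨x, h⟩ else none := by
      have := key x [] (Nat.zero_le N)
      simpa using this
    rw [heval]
    constructor
    · intro hx
      by_cases hxN : x.length ≤ N
      · rw [dif_pos hxN] at hx
        obtain ⟨l, hl1, hl2⟩ := hx
        obtain rfl : l = ⟨x, hxN⟩ := by simpa using hl1.symm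
        exact hl2
      · rw [dif_neg hxN] at hx
        obtain ⟨l, hl1, _⟩ := hx
        exact absurd hl1 (by simp)
    · intro hx
      rw [dif_pos (hbound x hx)]
      exact ⟨⟨x, hbound x hx⟩, rfl, hx⟩
  rw [← hacc]
  exact MyAux.accepts_isRegular M

end Aux

/-- The canonical padded pairing of `(u, v)`. -/
def MyAux.padPair {α : Type*} (u v : List α) : List (Option α × Option α) :=
  List.zip (u.map some ++ List.replicate (v.length - u.length) none)
    (v.map some ++ List.replicate (u.length - v.length) none)

theorem MyAux.isPaddedPairing_padPair {α : Type*} (u v : List α) :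
    IsPaddedPairing u v (MyAux.padPair u v) := by
  constructor
  · rw [MyAux.padPair, List.map_fst_zip]
    simp; omega
  · rw [MyAux.padPair, List.map_snd_zip]
    simp; omega

theorem MyAux.recover {α : Type*} (u : List α) (k : ℕ) :
    (u.map some ++ List.replicate k none).filterMap id = u := by
  rw [List.filterMap_append]
  simp [List.filterMap_replicate]

theorem MyAux.unique {α : Type*} {u v u' v' : List α}
    {p : List (Option α × Option α)} (h : IsPaddedPairing u v p)
    (h' : IsPaddedPairing u' v' p) : u = u' ∧ v = v' := by
  constructor
  · have := congrArg (List.filterMap id) (h.1.symm.trans h'.1)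
    rwa [MyAux.recover, MyAux.recover] at this
  · have := congrArg (List.filterMap id) (h.2.symm.trans h'.2)
    rwa [MyAux.recover, MyAux.recover] at this

open Fin.NatCast Fin.CommRing in
theorem finite_language_forall_exists_realizable {α : Type*} [Fintype α]
    [DecidableEq α] (L : Set (List α)) (hfin : L.Finite) (hne : L.Nonempty) :
    ∃ P : Language (Option α × Option α), P.IsRegular ∧
      ∀ L' : Set (List α),
        (L'.Nonempty ∧ ∀ u ∈ L', ∃ v ∈ L', ∃ p ∈ P, IsPaddedPairing u v p) ↔
          L' = L := by
  classical
  set l := hfin.toFinset.toList with hl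
  have hnodup : l.Nodup := Finset.nodup_toList _
  have hmem : ∀ w, w ∈ l ↔ w ∈ L := fun w => by
    rw [hl, Finset.mem_toList, Set.Finite.mem_toFinset]
  have hn : 0 < l.length := by
    obtain ⟨w, hw⟩ := hne
    exact List.length_pos_iff.mpr (List.ne_nil_of_mem ((hmem w).mpr hw))
  haveI : NeZero l.length := ⟨hn.ne'⟩
  set f : Fin l.length → List (Option α × Option α) :=
    fun i => MyAux.padPair (l.get i) (l.get (i + 1)) with hf
  refine ⟨Set.range f, MyAux.isRegular_of_finite (Set.finite_range f), ?_⟩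
  intro L'
  constructor
  · rintro ⟨⟨w0, hw0⟩, hstep⟩
    -- the index set of words in L'
    have hS : ∀ i : Fin l.length, l.get i ∈ L' → l.get (i + 1) ∈ L' := by
      intro i hi
      obtain ⟨v, hv, p, hp, hpp⟩ := hstep _ hi
      obtain ⟨j, rfl⟩ := hp
      obtain ⟨he1, he2⟩ := MyAux.unique hpp (MyAux.isPaddedPairing_padPair _ _)
      have hij : i = j := hnodup.get_inj_iff.mp he1
      subst hij
      rwa [← he2]
    have hiter : ∀ (m : ℕ) (i : Fin l.length),
        l.get i ∈ L' → l.get (i + (m : Fin l.length)) ∈ L' := by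
      intro m
      induction m with
      | zero => intro i hi; simpa using hi
      | succ m ih =>
        intro i hi
        have : ((m + 1 : ℕ) : Fin l.length) = (m : Fin l.length) + 1 := by
          push_cast; ring
        rw [this, ← add_assoc]
        exact hS _ (ih i hi)
    have hsub : L' ⊆ L := by
      intro u hu
      obtain ⟨v, hv, p, hp, hpp⟩ := hstep _ hu
      obtain ⟨j, rfl⟩ := hp
      obtain ⟨he1, he2⟩ := MyAux.unique hpp (MyAux.isPaddedPairing_padPair _ _)
      rw [he1]
      exact (hmem _).mp (l.get_mem _)
    refine Set.Subset.antisymm hsub ?_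
    intro w hw
    obtain ⟨i0, hi0⟩ := List.mem_iff_get.mp ((hmem w0).mpr (hsub hw0))
    obtain ⟨i, hi⟩ := List.mem_iff_get.mp ((hmem w).mpr hw)
    have h0 : l.get i0 ∈ L' := by rw [hi0]; exact hw0
    have := hiter ((i - i0 : Fin l.length) : ℕ) i0 h0
    rw [Fin.cast_val_eq_self, add_sub_cancel] at this
    rw [← hi]
    exact this
  · rintro rfl
    refine ⟨hne, ?_⟩
    intro u hu
    obtain ⟨i, hi⟩ := List.mem_iff_get.mp ((hmem u).mpr hu)
    refine ⟨l.get (i + 1), (hmem _).mp (l.get_mem _), f i, ⟨i, rfl⟩, ?_⟩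
    rw [hf, ← hi]
    exact MyAux.isPaddedPairing_padPair _ _
end

section
/- Let α be a type (alphabet), let σ be a finite type of states with n = Fintype.card σ, let A : DFA α σ, and let L = A.accepts. Define the relation Step on words by: Step u v iff there exist words x, c, y with u = x ++ y, v = x ++ c ++ y, c ≠ [], c.length ≤ n, and v ∈ L. Then for every w ∈ L there exists w₀ ∈ L with w₀.length < n and Relation.ReflTransGen Step w₀ w. -/
theorem regular_language_pumping_order {α : Type*} {σ : Type*} [Fintype σ]
    (A : DFA α σ) :
    ∀ w ∈ A.accepts, ∃ w₀ ∈ A.accepts, w₀.length < Fintype.card σ ∧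
      Relation.ReflTransGen
        (fun u v : List α => ∃ x c y : List α, u = x ++ y ∧ v = x ++ c ++ y ∧
          c ≠ [] ∧ c.length ≤ Fintype.card σ ∧ v ∈ A.accepts)
        w₀ w := by
  suffices H : ∀ m, ∀ w : List α, w.length = m → w ∈ A.accepts →
      ∃ w₀ ∈ A.accepts, w₀.length < Fintype.card σ ∧
        Relation.ReflTransGen
          (fun u v : List α => ∃ x c y : List α, u = x ++ y ∧ v = x ++ c ++ y ∧
            c ≠ [] ∧ c.length ≤ Fintype.card σ ∧ v ∈ A.accepts) w₀ w by
    intro w hw; exact H w.length w rfl hw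
  intro m
  induction m using Nat.strong_induction_on with
  | _ m ih =>
    intro w hlen hw
    by_cases h : w.length < Fintype.card σ
    · exact ⟨w, hw, h, .refl⟩
    · obtain ⟨a, b, c, hweq, hab, hb, hsub⟩ := A.pumping_lemma hw (le_of_not_gt h)
      have hac : a ++ c ∈ A.accepts := by
        refine hsub (?_ : a ++ c ∈ ({a} * KStar.kstar {b} * {c} : Language α))
        rw [Language.mem_mul]
        refine ⟨a, ?_, c, rfl, rfl⟩
        rw [Language.mem_mul]
        exact ⟨a, rfl, [], Language.nil_mem_kstar _, by simp⟩
      have hblen : b.length ≤ Fintype.card σ := le_trans (Nat.le_add_left _ _) hab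
      have hlt : (a ++ c).length < m := by
        subst hlen hweq
        simp only [List.length_append]
        have := List.length_pos_iff.mpr hb
        omega
      obtain ⟨w₀, hw₀, hw₀len, hrel⟩ := ih _ hlt (a ++ c) rfl hac
      exact ⟨w₀, hw₀, hw₀len, hrel.tail ⟨a, b, c, rfl, by rw [hweq], hb, hblen, hw⟩⟩
end

section
/- Let α be a type (alphabet), let k ≥ 1, and let H : Set (List (Fin k → Option α)) be an arbitrary language of word assignments. For a word p over Fin k → Option α, define its i-th projection as List.reduceOption (List.map (fun g => g i) p). Say that a language L : Set (List α) satisfies the ∀^k condition with respect to H iff L is nonempty and for every f : Fin k → List α with f i ∈ L for all i, there exists p ∈ H whose i-th projection equals f i for every i. Then there exists a language L satisfying the ∀^k condition with respect to H if and only if there exists a single word w : List α such that the singleton language {w} satisfies the ∀^k condition with respect to H. -/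
/-- The `i`-th projection of a word assignment: the word over `α` obtained
from the `i`-th components after deleting the padding symbols `none`. -/
def wordProj {α : Type*} {k : ℕ} (p : List (Fin k → Option α)) (i : Fin k) :
    List α :=
  (p.map (fun g => g i)).reduceOption

/-- `L` satisfies the `∀^k` condition with respect to the word-assignment
language `H`. -/
def SatForall {α : Type*} (k : ℕ) (H : Set (List (Fin k → Option α)))
    (L : Set (List α)) : Prop :=
  L.Nonempty ∧ ∀ f : Fin k → List α, (∀ i, f i ∈ L) →
    ∃ p ∈ H, ∀ i : Fin k, wordProj p i = f i

theorem forall_cfhg_nonempty_iff_singleton {α : Type*} (k : ℕ) (hk : 1 ≤ k)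
    (H : Set (List (Fin k → Option α))) :
    (∃ L : Set (List α), SatForall k H L) ↔
      ∃ w : List α, SatForall k H {w} := by
  constructor
  · rintro ⟨L, ⟨⟨w, hw⟩, h⟩⟩
    refine ⟨w, ⟨w, rfl⟩, ?_⟩
    intro f hf
    exact h f fun i => (hf i) ▸ hw
  · rintro ⟨w, hw⟩
    exact ⟨{w}, hw⟩
end

section
/- Let α be a type (alphabet), let m ≥ 0, and let H : Set (List (Fin (m+1) → Option α)) be an arbitrary language of word assignments, where coordinate 0 corresponds to an existential variable and coordinates 1,…,m to universal variables. For a word p over Fin (m+1) → Option α and i : Fin (m+1), define its i-th projection as List.reduceOption (List.map (fun g => g i) p). Say that a language L : Set (List α) satisfies the ∃∀^m condition with respect to H iff L is nonempty and there exists w ∈ L such that for every g : Fin m → List α with g j ∈ L for all j, there exists p ∈ H whose 0-th projection equals w and whose (j+1)-th projection equals g j for every j : Fin m. Then there exists a language L satisfying the ∃∀^m condition with respect to H if and only if there exists a word w : List α such that the singleton language {w} satisfies the ∃∀^m condition with respect to H. -/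
/-- `L` satisfies the `∃∀^m` condition with respect to the word-assignment
language `H`: coordinate `0` is the existential variable and coordinates
`1, …, m` are the universal variables. -/
def SatExistsForall {α : Type*} (m : ℕ)
    (H : Set (List (Fin (m + 1) → Option α))) (L : Set (List α)) : Prop :=
  L.Nonempty ∧ ∃ w ∈ L, ∀ g : Fin m → List α, (∀ j, g j ∈ L) →
    ∃ p ∈ H, wordProj p 0 = w ∧ ∀ j : Fin m, wordProj p j.succ = g j

theorem exists_forall_cfhg_nonempty_iff_singleton {α : Type*} (m : ℕ)
    (H : Set (List (Fin (m + 1) → Option α))) :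
    (∃ L : Set (List α), SatExistsForall m H L) ↔
      ∃ w : List α, SatExistsForall m H {w} := by
  constructor
  · rintro ⟨L, -, w, hw, hall⟩
    refine ⟨w, ⟨w, rfl⟩, w, rfl, fun g hg => ?_⟩
    exact hall g fun j => by rw [hg j]; exact hw
  · rintro ⟨w, h⟩
    exact ⟨{w}, h⟩
end
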